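/- Let G = (V,E) be a finite directed graph with no sources or sinks, Ω_G its one-sided infinite path space, σ_G the shift, and for y ∈ Ω_G let 𝒱_y = {(x,n) : ∃ k ≥ max(0,−n), σ_G^{n+k}(x) = σ_G^k(y)} with κ_G(x,n,y) := min{k ≥ max(0,−n) : σ_G^{n+k}(x) = σ_G^k(y)}. Then for each n ∈ ℤ and k ≥ max(0,−n), the number of pairs (x,n) with κ_G(x,n,y) = k is at most |E|^{n+k} ≤ e^{log|E|(|n|+k)}, and consequently the series Σ_{(x,n) ∈ 𝒱_y} e^{−t(|n| + κ_G(x,n,y))} converges for all t > log|E|. -/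

import Mathlib

open Filter

/-- `x : ℕ → E` is an infinite path in the graph with source and range maps `s, r`. -/
def IsPath {V E : Type*} (s r : E → V) (x : ℕ → E) : Prop :=
  ∀ j : ℕ, s (x j) = r (x (j + 1))

/-- The `k`-fold shift `σ_G^k x` of an infinite path. -/
def shiftPath {E : Type*} (x : ℕ → E) (k : ℕ) : ℕ → E := fun j => x (j + k)

/-- The set `𝒱_y = {(x,n) : ∃ k ≥ max(0,−n), σ_G^{n+k} x = σ_G^k y}` (with `x` an
infinite path). -/
def pathVertexSet {V E : Type*} (s r : E → V) (y : ℕ → E) : Set ((ℕ → E) × ℤ) :=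
  {p | IsPath s r p.1 ∧
    ∃ k : ℕ, -p.2 ≤ (k : ℤ) ∧ shiftPath p.1 (p.2 + (k : ℤ)).toNat = shiftPath y k}

/-- `κ_G(x,n,y) = min {k ≥ max(0,−n) : σ_G^{n+k} x = σ_G^k y}`. -/
noncomputable def kappaG {E : Type*} (y x : ℕ → E) (n : ℤ) : ℕ :=
  sInf {k : ℕ | -n ≤ (k : ℤ) ∧ shiftPath x (n + (k : ℤ)).toNat = shiftPath y k}

section Aux

variable {V E : Type*} {s r : E → V} {y : ℕ → E}

lemma kappa_mem {x : ℕ → E} {n : ℤ} (h : (x, n) ∈ pathVertexSet s r y) :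
    -n ≤ (kappaG y x n : ℤ) ∧
      shiftPath x (n + (kappaG y x n : ℤ)).toNat = shiftPath y (kappaG y x n) :=
  Nat.sInf_mem h.2

lemma eq_of_prefix_eq {x x' : ℕ → E} {m k : ℕ}
    (hx : shiftPath x m = shiftPath y k) (hx' : shiftPath x' m = shiftPath y k)
    (hpre : ∀ i < m, x i = x' i) : x = x' := by
  funext j
  rcases lt_or_ge j m with hj | hj
  · exact hpre j hj
  · have h1 := congrFun hx (j - m)
    have h2 := congrFun hx' (j - m)
    simp only [shiftPath] at h1 h2
    rw [Nat.sub_add_cancel hj] at h1 h2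
    rw [h1, h2]

/-- The coding map sending `(x, n)` to `(n, (n+κ).toNat)` together with the initial
segment of `x` of length `(n+κ).toNat`. -/
noncomputable def enc (s r : E → V) (y : ℕ → E) (p : pathVertexSet s r y) :
    (q : ℤ × ℕ) × (Fin q.2 → E) :=
  ⟨(p.1.2, (p.1.2 + (kappaG y p.1.1 p.1.2 : ℤ)).toNat), fun i => p.1.1 i⟩

lemma enc_injective (s r : E → V) (y : ℕ → E) : Function.Injective (enc s r y) := by
  rintro ⟨⟨x, n⟩, hp⟩ ⟨⟨x', n'⟩, hp'⟩ h
  have hfst := congrArg Sigma.fst h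
  simp only [enc] at hfst h
  obtain ⟨hn, hM⟩ := Prod.ext_iff.mp hfst
  subst hn
  have hk1 := kappa_mem (s := s) (r := r) hp
  have hk2 := kappa_mem (s := s) (r := r) hp'
  have hκ : kappaG y x n = kappaG y x' n := by
    have e1 : ((n + (kappaG y x n : ℤ)).toNat : ℤ) = n + (kappaG y x n : ℤ) :=
      Int.toNat_of_nonneg (by linarith [hk1.1])
    have e2 : ((n + (kappaG y x' n : ℤ)).toNat : ℤ) = n + (kappaG y x' n : ℤ) :=
      Int.toNat_of_nonneg (by linarith [hk2.1])
    have := congrArg (fun m : ℕ => (m : ℤ)) hM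
    simp only [e1, e2] at this
    omega
  rw [hκ] at h
  have hpre := sigma_mk_injective h
  have hx : x = x' := by
    refine eq_of_prefix_eq (k := kappaG y x' n) ?_ hk2.2 ?_
    · rw [← hκ]; exact hκ ▸ hk1.2
    · intro i hi
      exact congrFun hpre ⟨i, hi⟩
  subst hx
  rfl

end Aux

set_option maxHeartbeats 2000000 in
/-- For a finite graph (no sources or sinks) and `y` an infinite path: for each `n ∈ ℤ`
and `k ≥ max(0,−n)` the set of `(x,n) ∈ 𝒱_y` with `κ_G(x,n,y) = k` is finite of
cardinality at most `|E|^{n+k} ≤ e^{log|E|·(|n|+k)}`, and consequently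
`Σ_{(x,n)∈𝒱_y} e^{−t(|n|+κ_G(x,n,y))}` converges for all `t > log|E|`. -/
theorem stmt17 {V E : Type*} [Fintype E] (s r : E → V)
    (hnosource : ∀ v : V, ∃ e : E, r e = v)
    (hnosink : ∀ v : V, ∃ e : E, s e = v)
    (y : ℕ → E) (hy : IsPath s r y) :
    (∀ (n : ℤ) (k : ℕ), -n ≤ (k : ℤ) →
      ({x : ℕ → E | (x, n) ∈ pathVertexSet s r y ∧ kappaG y x n = k}).Finite ∧
      (Nat.card {x : ℕ → E | (x, n) ∈ pathVertexSet s r y ∧ kappaG y x n = k} : ℝ)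
          ≤ (Fintype.card E : ℝ) ^ (n + (k : ℤ)).toNat ∧
      (Fintype.card E : ℝ) ^ (n + (k : ℤ)).toNat
          ≤ Real.exp (Real.log (Fintype.card E) * ((|n| + (k : ℤ) : ℤ) : ℝ))) ∧
    (∀ t : ℝ, Real.log (Fintype.card E) < t →
      Summable (fun p : pathVertexSet s r y =>
        Real.exp (-t * (((|p.1.2| : ℤ) : ℝ) + (kappaG y p.1.1 p.1.2 : ℝ))))) := by
  have hEne : Nonempty E := ⟨y 0⟩
  have hc1 : (1 : ℝ) ≤ (Fintype.card E : ℝ) := by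
    exact_mod_cast Fintype.card_pos
  have hcpos : (0 : ℝ) < (Fintype.card E : ℝ) := by linarith
  have hlc : 0 ≤ Real.log (Fintype.card E) := Real.log_nonneg hc1
  constructor
  · -- Part 1
    intro n k hk
    set m : ℕ := (n + (k : ℤ)).toNat with hmdef
    have hmz : (m : ℤ) = n + (k : ℤ) := Int.toNat_of_nonneg (by linarith)
    set S := {x : ℕ → E | (x, n) ∈ pathVertexSet s r y ∧ kappaG y x n = k} with hS
    have key : ∀ x ∈ S, shiftPath x m = shiftPath y k := by
      intro x hx
      have h := (kappa_mem hx.1).2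
      rwa [hx.2] at h
    have hinj : Set.InjOn (fun x => (fun i : Fin m => x i)) S := by
      intro x hx x' hx' h
      exact eq_of_prefix_eq (key x hx) (key x' hx') fun i hi => congrFun h ⟨i, hi⟩
    have hfin : S.Finite := Set.Finite.of_finite_image (Set.toFinite _) hinj
    refine ⟨hfin, ?_, ?_⟩
    · have hinj' : Function.Injective (fun x : S => (fun i : Fin m => (x : ℕ → E) i)) := by
        intro a b hab
        exact Subtype.ext (hinj a.2 b.2 hab)
      have hle := Nat.card_le_card_of_injective _ hinj'
      have hcard : Nat.card (Fin m → E) = Fintype.card E ^ m := by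
        simp [Nat.card_eq_fintype_card, Fintype.card_fun]
      rw [hcard] at hle
      exact_mod_cast hle
    · have hmle : (m : ℝ) ≤ ((|n| + (k : ℤ) : ℤ) : ℝ) := by
        have : (m : ℤ) ≤ |n| + (k : ℤ) := by
          rw [hmz]; have := le_abs_self n; linarith
        exact_mod_cast this
      calc (Fintype.card E : ℝ) ^ m
          = Real.exp (Real.log (Fintype.card E)) ^ m := by rw [Real.exp_log hcpos]
        _ = Real.exp ((m : ℝ) * Real.log (Fintype.card E)) := by
            rw [← Real.exp_nat_mul]
        _ ≤ Real.exp (Real.log (Fintype.card E) * ((|n| + (k : ℤ) : ℤ) : ℝ)) := by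
            rw [Real.exp_le_exp, mul_comm]
            exact mul_le_mul_of_nonneg_left hmle hlc
  · -- Part 2
    intro t ht
    set L : ℝ := Real.log (Fintype.card E) with hL
    set ε : ℝ := t - L with hεdef
    have hε0 : 0 < ε := by simp [hεdef]; linarith
    -- the dominating function on the sigma type
    set g : ((q : ℤ × ℕ) × (Fin q.2 → E)) → ℝ := fun w =>
      if w.1.1 ≤ (w.1.2 : ℤ) then Real.exp (-t * ((|w.1.1| - w.1.1 + (w.1.2 : ℤ) : ℤ) : ℝ))
      else 0 with hgdef
    have hg0 : ∀ w, 0 ≤ g w := by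
      intro w
      simp only [hgdef]
      split <;> positivity
    -- summability over ℕ of exp(-(ε/2) n)
    have hnat : Summable (fun j : ℕ => Real.exp (-(ε / 2) * (j : ℝ))) := by
      have := Real.summable_exp_nat_mul_iff (a := -(ε / 2)) |>.mpr (by linarith)
      exact this.congr fun j => by rw [mul_comm]
    have hu : Summable (fun n : ℤ => Real.exp (-(ε / 2) * |(n : ℝ)|)) := by
      refine Summable.of_nat_of_neg (hnat.congr fun j => ?_) (hnat.congr fun j => ?_)
      · norm_num [abs_of_nonneg]
      · norm_num [abs_of_nonneg]
    have hH : Summable (fun q : ℤ × ℕ =>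
        Real.exp (-(ε / 2) * |(q.1 : ℝ)|) * Real.exp (-(ε / 2) * (q.2 : ℝ))) :=
      hu.mul_of_nonneg hnat (fun _ => Real.exp_nonneg _) (fun _ => Real.exp_nonneg _)
    -- fiber sums
    have hfib : ∀ q : ℤ × ℕ, ∑' v : Fin q.2 → E, g ⟨q, v⟩ =
        (Fintype.card E : ℝ) ^ q.2 *
          (if q.1 ≤ (q.2 : ℤ) then
            Real.exp (-t * ((|q.1| - q.1 + (q.2 : ℤ) : ℤ) : ℝ)) else 0) := by
      intro q
      simp only [hgdef]
      rw [tsum_fintype, Finset.sum_const, Finset.card_univ]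
      simp [Fintype.card_fun, nsmul_eq_mul]
    -- pointwise bound on fiber sums
    have hbound : ∀ q : ℤ × ℕ,
        (Fintype.card E : ℝ) ^ q.2 *
          (if q.1 ≤ (q.2 : ℤ) then
            Real.exp (-t * ((|q.1| - q.1 + (q.2 : ℤ) : ℤ) : ℝ)) else 0)
        ≤ Real.exp (-(ε / 2) * |(q.1 : ℝ)|) * Real.exp (-(ε / 2) * (q.2 : ℝ)) := by
      rintro ⟨n, m⟩
      dsimp only
      split
      · rename_i hnm
        set A : ℝ := ((|n| - n + (m : ℤ) : ℤ) : ℝ) with hA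
        have hA1 : (m : ℝ) ≤ A := by
          have h : (m : ℤ) ≤ |n| - n + (m : ℤ) := by linarith [le_abs_self n]
          rw [hA]; exact_mod_cast h
        have hA2 : |(n : ℝ)| ≤ A := by
          have h : |n| ≤ |n| - n + (m : ℤ) := by linarith
          rw [hA]
          calc |(n : ℝ)| = ((|n| : ℤ) : ℝ) := by push_cast; ring
            _ ≤ _ := by exact_mod_cast h
        calc (Fintype.card E : ℝ) ^ m * Real.exp (-t * A)
            = Real.exp (L) ^ m * Real.exp (-t * A) := by rw [hL, Real.exp_log hcpos]
          _ = Real.exp ((m : ℝ) * L + -t * A) := by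
              rw [← Real.exp_nat_mul, ← Real.exp_add]
          _ ≤ Real.exp (-(ε / 2) * |(n : ℝ)| + -(ε / 2) * (m : ℝ)) := by
              rw [Real.exp_le_exp]
              have h1 : L * (m : ℝ) ≤ L * A := mul_le_mul_of_nonneg_left hA1 hlc
              have h2 : ε * ((|(n : ℝ)| + (m : ℝ)) / 2) ≤ ε * A := by
                apply mul_le_mul_of_nonneg_left _ (le_of_lt hε0)
                linarith
              have ht' : t = L + ε := by rw [hεdef]; ring
              have h3 : t * A = L * A + ε * A := by rw [ht']; ring
              have h4 : (m : ℝ) * L + (ε / 2) * |(n : ℝ)| + (ε / 2) * (m : ℝ) ≤ t * A := by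
                rw [h3]; linarith
              linarith
          _ = Real.exp (-(ε / 2) * |(n : ℝ)|) * Real.exp (-(ε / 2) * (m : ℝ)) :=
              Real.exp_add _ _
      · simp only [mul_zero]
        positivity
    -- g is summable
    have hg : Summable g := by
      rw [summable_sigma_of_nonneg hg0]
      constructor
      · intro q
        exact Summable.of_finite
      · refine Summable.of_nonneg_of_le (fun q => ?_) (fun q => ?_) hH
        · rw [hfib q]
          positivity
        · rw [hfib q]
          exact hbound q
    -- transfer along the injective coding map
    have hfe : ∀ p : pathVertexSet s r y,
        Real.exp (-t * (((|p.1.2| : ℤ) : ℝ) + (kappaG y p.1.1 p.1.2 : ℝ))) = g (enc s r y p) := by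
      intro p
      obtain ⟨⟨x, n⟩, hp⟩ := p
      have hk := kappa_mem (s := s) (r := r) hp
      set κ : ℕ := kappaG y x n with hκdef
      have hmz : ((n + (κ : ℤ)).toNat : ℤ) = n + (κ : ℤ) :=
        Int.toNat_of_nonneg (by linarith [hk.1])
      simp only [enc, hgdef]
      rw [← hκdef]
      rw [if_pos]
      · congr 1
        push_cast [hmz]
        ring
      · rw [hmz]
        have : (0 : ℤ) ≤ (κ : ℤ) := Int.natCast_nonneg κ
        linarith
    refine ((hg.comp_injective (enc_injective s r y)).congr fun p => ?_)
    exact (hfe p).symm
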